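/- Let X be an integer-valued random variable whose distribution has exactly k ≥ 3 distinct atoms x₁, …, x_k, all lying in a lattice of step h (a positive integer), and such that the atoms are not all contained in a non-trivial arithmetic progression of that lattice (equivalently, the greatest common divisor of the pairwise differences |x_i − x_j| equals h). Define w(x) = max over indices i, j, ℓ with i ≠ ℓ and j ≠ ℓ of |x_i − x_ℓ| / gcd(|x_i − x_ℓ|, |x_j − x_ℓ|). Then there is an absolute constant C > 0 (one may take C = 1/16) such that H_h(X) ≥ C · (min_{i∈[k]} P(X = x_i)) / ( k · (w(x)·h)² ). -/

import Mathlib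

open MeasureTheory

/-- Distance from a real number to the nearest integer. -/
noncomputable def distNearestInt (α : ℝ) : ℝ := |α - round α|

/-- `H(X,d) = E⟨X* d⟩²` where `X* = X - X'` is the symmetrisation of `X`; expressed via
the law `ν` of `X` as a double integral. -/
noncomputable def Hsym (ν : Measure ℝ) (d : ℝ) : ℝ :=
  ∫ x, ∫ y, distNearestInt ((x - y) * d) ^ 2 ∂ν ∂ν

/-- `H_D(X) = inf_{1/(4D) ≤ d ≤ 1/(2D)} H(X,d)`. -/
noncomputable def HsymD (ν : Measure ℝ) (D : ℕ) : ℝ :=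
  sInf (Hsym ν '' Set.Icc (1 / (4 * (D : ℝ))) (1 / (2 * (D : ℝ))))

/-- `w(x) = max_{i ≠ ℓ, j ≠ ℓ} |x_i - x_ℓ| / gcd(|x_i - x_ℓ|, |x_j - x_ℓ|)`. -/
def wParam {k : ℕ} (x : Fin k → ℤ) : ℕ :=
  (Finset.univ.filter
      (fun t : Fin k × Fin k × Fin k => t.1 ≠ t.2.2 ∧ t.2.1 ≠ t.2.2)).sup
    (fun t => (x t.1 - x t.2.2).natAbs /
      Nat.gcd (x t.1 - x t.2.2).natAbs ((x t.2.1 - x t.2.2).natAbs))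

/-- If `X` is an integer-valued random variable with exactly `k ≥ 3` atoms `x₁,…,x_k`
lying in a lattice of step `h` and not all contained in a non-trivial arithmetic
progression of the lattice (the gcd of the pairwise differences is `h`), then
`H_h(X) ≥ (1/16) · min_i P(X = x_i) / (k (w(x) h)²)`. -/
lemma wParam_ge_one {k : ℕ} (x : Fin k → ℤ) (hinj : Function.Injective x)
    (ℓ j0 : Fin k) (hj0 : j0 ≠ ℓ) : 1 ≤ wParam x := by
  have hne : (x j0 - x ℓ).natAbs ≠ 0 := by
    simp only [ne_eq, Int.natAbs_eq_zero, sub_eq_zero]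
    exact fun e => hj0 (hinj e)
  have hmem : ((j0, j0, ℓ) : Fin k × Fin k × Fin k) ∈
      Finset.univ.filter (fun t : Fin k × Fin k × Fin k => t.1 ≠ t.2.2 ∧ t.2.1 ≠ t.2.2) := by
    simp [hj0]
  have hle := Finset.le_sup (f := fun t : Fin k × Fin k × Fin k => (x t.1 - x t.2.2).natAbs /
      Nat.gcd (x t.1 - x t.2.2).natAbs ((x t.2.1 - x t.2.2).natAbs)) hmem
  simp only [Nat.gcd_self, Nat.div_self (Nat.pos_of_ne_zero hne)] at hle
  exact hle

lemma key_lemma {k h : ℕ} (hh : 0 < h) (x : Fin k → ℤ)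
    (hinj : Function.Injective x)
    (hgcd : (Finset.univ : Finset (Fin k × Fin k)).gcd
      (fun q => (x q.1 - x q.2).natAbs) = h)
    (ℓ j0 : Fin k) (hj0 : j0 ≠ ℓ)
    {d : ℝ} (hd1 : 1 / (4 * (h:ℝ)) ≤ d) (hd2 : d ≤ 1 / (2 * (h:ℝ))) :
    ∃ j, j ≠ ℓ ∧ 1 / (4 * (wParam x : ℝ)) ≤ distNearestInt (((x j : ℝ) - (x ℓ : ℝ)) * d) := by
  by_contra hcon
  push_neg at hcon
  set W := wParam x with hW
  have hW1 : 1 ≤ W := wParam_ge_one x hinj ℓ j0 hj0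
  have hWR : (1:ℝ) ≤ W := by exact_mod_cast hW1
  have hWpos : (0:ℝ) < W := by linarith
  have hhR : (0:ℝ) < h := by exact_mod_cast hh
  -- h*d ∈ [1/4, 1/2]
  rw [div_le_iff₀ (by positivity)] at hd1
  rw [le_div_iff₀ (by positivity)] at hd2
  have hhd1 : (1:ℝ)/4 ≤ (h:ℝ) * d := by nlinarith
  have hhd2 : (h:ℝ) * d ≤ 1/2 := by nlinarith
  have hquarter : ∀ m : ℤ, (1:ℝ)/4 ≤ |(h:ℝ) * d - m| := by
    intro m
    rcases le_or_gt (m:ℝ) 0 with hm | hm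
    · rw [abs_of_nonneg (by linarith)]; linarith
    · have hmz : (0:ℤ) < m := by exact_mod_cast hm
      have : (1:ℝ) ≤ (m:ℝ) := by exact_mod_cast hmz
      rw [abs_of_nonpos (by linarith)]; linarith
  set B : Fin k → ℤ := fun j => x j - x ℓ with hB
  set n : Fin k → ℤ := fun j => round (((B j : ℤ) : ℝ) * d) with hn
  have hcast : ∀ j, ((x j : ℝ) - (x ℓ : ℝ)) = ((B j : ℤ) : ℝ) := by
    intro j; simp [hB]
  have hδ : ∀ j, j ≠ ℓ → |((B j : ℤ) : ℝ) * d - n j| < 1 / (4 * (W:ℝ)) := by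
    intro j hjl
    have := hcon j hjl
    rwa [distNearestInt, hcast j] at this
  have hBne : ∀ j, j ≠ ℓ → B j ≠ 0 := by
    intro j hjl e
    exact hjl (hinj (sub_eq_zero.mp e))
  have hhB : ∀ j, (h:ℤ) ∣ B j := by
    intro j
    have hdv := Finset.gcd_dvd (f := fun q : Fin k × Fin k => (x q.1 - x q.2).natAbs)
      (Finset.mem_univ ((j, ℓ) : Fin k × Fin k))
    rw [hgcd] at hdv
    exact (Int.natCast_dvd_natCast.mpr hdv).trans (Int.natAbs_dvd.mpr dvd_rfl)
  have hWbound : ∀ i j : Fin k, i ≠ ℓ → j ≠ ℓ →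
      (B i).natAbs ≤ W * Int.gcd (B i) (B j) := by
    intro i j hi hj
    have hg : Nat.gcd (B i).natAbs (B j).natAbs ∣ (B i).natAbs := Nat.gcd_dvd_left _ _
    have hmem : ((i, j, ℓ) : Fin k × Fin k × Fin k) ∈
        Finset.univ.filter (fun t : Fin k × Fin k × Fin k => t.1 ≠ t.2.2 ∧ t.2.1 ≠ t.2.2) := by
      simp [hi, hj]
    have hsup := Finset.le_sup (f := fun t : Fin k × Fin k × Fin k => (x t.1 - x t.2.2).natAbs /
        Nat.gcd (x t.1 - x t.2.2).natAbs ((x t.2.1 - x t.2.2).natAbs)) hmem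
    have : (B i).natAbs / Nat.gcd (B i).natAbs (B j).natAbs ≤ W := hsup
    calc (B i).natAbs = (B i).natAbs / Nat.gcd (B i).natAbs (B j).natAbs *
          Nat.gcd (B i).natAbs (B j).natAbs := (Nat.div_mul_cancel hg).symm
      _ ≤ W * Nat.gcd (B i).natAbs (B j).natAbs :=
          Nat.mul_le_mul_right _ this
      _ = W * Int.gcd (B i) (B j) := rfl
  by_cases hcase : ∀ i, i ≠ ℓ → ∀ j, j ≠ ℓ → n i * B j = n j * B i
  · -- proportionality case
    set g0 : ℤ := (Int.gcd (n j0) (B j0) : ℤ) with hg0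
    have hBj0 : B j0 ≠ 0 := hBne j0 hj0
    have hg0pos : 0 < Int.gcd (n j0) (B j0) := Int.gcd_pos_of_ne_zero_right _ hBj0
    have hg0Z : (0:ℤ) < g0 := by rw [hg0]; exact_mod_cast hg0pos
    set u : ℤ := n j0 / g0 with hu
    set v : ℤ := B j0 / g0 with hv
    have hun : u * g0 = n j0 := Int.ediv_mul_cancel (Int.gcd_dvd_left _ _)
    have hvB : v * g0 = B j0 := Int.ediv_mul_cancel (Int.gcd_dvd_right _ _)
    have hv0 : v ≠ 0 := by
      intro e; rw [e, zero_mul] at hvB; exact hBj0 hvB.symm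
    have hcop : Int.gcd u v = 1 := Int.gcd_div_gcd_div_gcd hg0pos
    have hrel : ∀ j, j ≠ ℓ → n j * v = u * B j := by
      intro j hjl
      have := hcase j hjl j0 hj0
      rw [← hun, ← hvB] at this
      have h2 : n j * v * g0 = u * B j * g0 := by ring_nf; ring_nf at this; linarith
      exact mul_right_cancel₀ (ne_of_gt hg0Z) h2
    have hvBj : ∀ j, v ∣ B j := by
      intro j
      by_cases hjl : j = ℓ
      · subst hjl; simp [hB]
      · have h1 : v ∣ u * B j := ⟨n j, by linarith [hrel j hjl]⟩
        have h1' : v ∣ B j * u := by rwa [mul_comm] at h1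
        exact Int.dvd_of_dvd_mul_left_of_gcd_one h1' (by rwa [Int.gcd_comm] at hcop)
    have hvh : v ∣ (h:ℤ) := by
      have hnat : v.natAbs ∣ h := by
        rw [← hgcd]
        apply Finset.dvd_gcd
        intro q _
        refine Int.natAbs_dvd_natAbs.mpr ?_
        have : x q.1 - x q.2 = B q.1 - B q.2 := by simp [hB]
        rw [this]
        exact dvd_sub (hvBj q.1) (hvBj q.2)
      exact Int.natAbs_dvd.mp (Int.natCast_dvd_natCast.mpr hnat)
    set s : ℤ := (h:ℤ) / v with hs
    have hvs : v * s = (h:ℤ) := Int.mul_ediv_cancel' hvh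
    have hs0 : s ≠ 0 := by
      intro e
      rw [e, mul_zero] at hvs
      exact (by exact_mod_cast hh.ne' : (h:ℤ) ≠ 0) hvs.symm
    have hsg0 : s ∣ g0 := by
      have : v * s ∣ v * g0 := by rw [hvs, hvB]; exact hhB j0
      exact (mul_dvd_mul_iff_left hv0).mp this
    have hsabs : |(s:ℝ)| ≤ |(g0:ℝ)| := by
      have h1 : s.natAbs ≤ g0.natAbs := Nat.le_of_dvd (Int.natAbs_pos.mpr (ne_of_gt hg0Z))
        (Int.natAbs_dvd_natAbs.mpr hsg0)
      have h2 : |s| ≤ |g0| := by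
        rw [Int.abs_eq_natAbs, Int.abs_eq_natAbs]; exact_mod_cast h1
      exact_mod_cast h2
    -- compute δ_{j0}
    have hδ0 := hδ j0 hj0
    have hsR : (s:ℝ) ≠ 0 := by exact_mod_cast hs0
    have hvR : ((v:ℤ):ℝ) * s = h := by exact_mod_cast hvs
    have hvR' : ((v:ℤ):ℝ) = (h:ℝ) / s := (eq_div_iff hsR).mpr hvR
    have hexpand : ((B j0 : ℤ) : ℝ) * d - n j0 = (g0:ℝ) / s * ((h:ℝ) * d - s * u) := by
      rw [← hvB, ← hun]
      push_cast
      rw [hvR']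
      field_simp
    have habs : |((B j0 : ℤ) : ℝ) * d - n j0| = |(g0:ℝ)| / |(s:ℝ)| * |(h:ℝ) * d - (s*u : ℤ)| := by
      rw [hexpand]
      push_cast
      rw [abs_mul, abs_div]
    have hq := hquarter (s * u)
    have hge : (1:ℝ)/4 ≤ |((B j0 : ℤ) : ℝ) * d - n j0| := by
      rw [habs]
      have h1 : (1:ℝ) ≤ |(g0:ℝ)| / |(s:ℝ)| := by
        rw [le_div_iff₀ (by positivity)]
        simpa using hsabs
      calc (1:ℝ)/4 = 1 * (1/4) := by ring
        _ ≤ |(g0:ℝ)| / |(s:ℝ)| * |(h:ℝ) * d - (s*u : ℤ)| := by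
            apply mul_le_mul h1 (by simpa using hq) (by norm_num) (by positivity)
    have hle : 1 / (4 * (W:ℝ)) ≤ 1/4 := by
      rw [div_le_div_iff₀ (by positivity) (by norm_num)]
      linarith
    linarith
  · -- nondegenerate pair case
    push_neg at hcase
    obtain ⟨i, hi, j, hjl, hne'⟩ := hcase
    set g : ℕ := Int.gcd (B i) (B j) with hg
    have hBi : B i ≠ 0 := hBne i hi
    have hgpos : 0 < g := Int.gcd_pos_of_ne_zero_left _ hBi
    have hgdvd : (g:ℤ) ∣ n i * B j - n j * B i :=
      dvd_sub (Dvd.dvd.mul_left (Int.gcd_dvd_right _ _) _) (Dvd.dvd.mul_left (Int.gcd_dvd_left _ _) _)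
    have hΔne : n i * B j - n j * B i ≠ 0 := sub_ne_zero.mpr hne'
    have hgle : (g:ℤ) ≤ |n i * B j - n j * B i| :=
      Int.le_of_dvd (abs_pos.mpr hΔne) ((dvd_abs _ _).mpr hgdvd)
    have hgleR : (g:ℝ) ≤ |((n i * B j - n j * B i : ℤ) : ℝ)| := by exact_mod_cast hgle
    have hbi : ((B i).natAbs : ℝ) ≤ (W:ℝ) * g := by exact_mod_cast hWbound i j hi hjl
    have hbj : ((B j).natAbs : ℝ) ≤ (W:ℝ) * g := by
      have := hWbound j i hjl hi
      rw [Int.gcd_comm] at this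
      exact_mod_cast this
    have habsi : |((B i : ℤ):ℝ)| = ((B i).natAbs : ℝ) := by
      simp [Nat.cast_natAbs]
    have habsj : |((B j : ℤ):ℝ)| = ((B j).natAbs : ℝ) := by
      simp [Nat.cast_natAbs]
    have hδi := hδ i hi
    have hδj := hδ j hjl
    have hΔexpand : ((n i * B j - n j * B i : ℤ) : ℝ) =
        (((n i : ℝ)) - (B i : ℤ) * d) * (B j : ℤ) - ((n j : ℝ) - (B j : ℤ) * d) * (B i : ℤ) := by
      push_cast; ring
    have hΔbound : |((n i * B j - n j * B i : ℤ) : ℝ)| < 1 / (4 * (W:ℝ)) * (((B j).natAbs : ℝ) + ((B i).natAbs : ℝ)) := by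
      rw [hΔexpand]
      calc |(((n i : ℝ)) - (B i : ℤ) * d) * (B j : ℤ) - ((n j : ℝ) - (B j : ℤ) * d) * (B i : ℤ)|
          ≤ |((n i : ℝ)) - (B i : ℤ) * d| * |((B j : ℤ):ℝ)| +
            |((n j : ℝ)) - (B j : ℤ) * d| * |((B i : ℤ):ℝ)| := by
            refine (abs_sub _ _).trans ?_
            rw [abs_mul, abs_mul]
        _ < 1 / (4 * (W:ℝ)) * (((B j).natAbs : ℝ) + ((B i).natAbs : ℝ)) := by
            rw [habsi, habsj]
            have hi' : |((n i : ℝ)) - (B i : ℤ) * d| < 1 / (4 * (W:ℝ)) := by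
              rw [abs_sub_comm]; exact hδi
            have hj' : |((n j : ℝ)) - (B j : ℤ) * d| < 1 / (4 * (W:ℝ)) := by
              rw [abs_sub_comm]; exact hδj
            have hbj0 : (0:ℝ) < ((B j).natAbs : ℝ) := by
              have : (B j).natAbs ≠ 0 := Int.natAbs_ne_zero.mpr (hBne j hjl)
              positivity
            have hbi0 : (0:ℝ) < ((B i).natAbs : ℝ) := by
              have : (B i).natAbs ≠ 0 := Int.natAbs_ne_zero.mpr hBi
              positivity
            nlinarith
    have hgR : (0:ℝ) < g := by exact_mod_cast hgpos
    have : (g:ℝ) < 1 / (4 * (W:ℝ)) * ((W:ℝ) * g + (W:ℝ) * g) := by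
      calc (g:ℝ) ≤ |((n i * B j - n j * B i : ℤ) : ℝ)| := hgleR
        _ < 1 / (4 * (W:ℝ)) * (((B j).natAbs : ℝ) + ((B i).natAbs : ℝ)) := hΔbound
        _ ≤ 1 / (4 * (W:ℝ)) * ((W:ℝ) * g + (W:ℝ) * g) := by
            apply mul_le_mul_of_nonneg_left (by linarith) (by positivity)
    have : (g:ℝ) < g / 2 := by
      calc (g:ℝ) < 1 / (4 * (W:ℝ)) * ((W:ℝ) * g + (W:ℝ) * g) := this
        _ = g / 2 := by field_simp; ring
    linarith

lemma distNearestInt_neg (α : ℝ) : distNearestInt (-α) = distNearestInt α := by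
  unfold distNearestInt
  apply le_antisymm
  · calc |(-α) - round (-α)| ≤ |(-α) - ((-(round α) : ℤ) : ℝ)| := round_le _ _
      _ = |α - round α| := by push_cast; rw [← abs_neg]; ring_nf
  · calc |α - round α| ≤ |α - ((-(round (-α)) : ℤ) : ℝ)| := round_le _ _
      _ = |(-α) - round (-α)| := by push_cast; rw [← abs_neg]; ring_nf


theorem HsymD_lower_bound_atoms
    {Ω : Type*} [MeasurableSpace Ω] {μ : Measure Ω} [IsProbabilityMeasure μ]
    (X : Ω → ℝ) (hX : Measurable X)
    (k h : ℕ) (hk : 3 ≤ k) (hh : 0 < h)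
    (x : Fin k → ℤ) (hinj : Function.Injective x)
    (p : Fin k → ℝ) (hp : ∀ i, 0 < p i)
    (hatom : ∀ i, (μ {ω | X ω = (x i : ℝ)}).toReal = p i)
    (hsupp : μ {ω | ∀ i, X ω ≠ (x i : ℝ)} = 0)
    (hgcd : (Finset.univ : Finset (Fin k × Fin k)).gcd
      (fun q => (x q.1 - x q.2).natAbs) = h) :
    (1 / 16 : ℝ) *
        (Finset.univ.inf' ⟨⟨0, by omega⟩, Finset.mem_univ _⟩ p) /
        (k * ((wParam x : ℝ) * h) ^ 2) ≤
      HsymD (μ.map X) h := by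
  classical
  have hinjR : Function.Injective (fun i : Fin k => ((x i : ℤ) : ℝ)) :=
    fun i j hij => hinj (Int.cast_injective hij)
  set ν := μ.map X with hν
  haveI : IsProbabilityMeasure ν := Measure.isProbabilityMeasure_map hX.aemeasurable
  set S : Finset ℝ := Finset.univ.image (fun i : Fin k => ((x i : ℤ) : ℝ)) with hS
  have hνatom : ∀ i, (ν {((x i : ℤ):ℝ)}).toReal = p i := by
    intro i
    rw [hν, Measure.map_apply hX (measurableSet_singleton _)]
    rw [← hatom i]
    rfl
  have hScompl : ν (↑S)ᶜ = 0 := by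
    rw [hν, Measure.map_apply hX S.measurableSet.compl]
    have heq : X ⁻¹' (↑S)ᶜ = {ω | ∀ i, X ω ≠ ((x i : ℤ):ℝ)} := by
      ext ω
      simp [hS, eq_comm]
    rw [heq]
    exact hsupp
  have hrestrict : ν.restrict ↑S = ν := by
    apply Measure.restrict_eq_self_of_ae_mem
    rw [ae_iff]
    exact hScompl
  -- sum of atom masses is 1
  have hSmeasure : ν ↑S = 1 := by
    have h1 := measure_add_measure_compl (μ := ν) S.measurableSet
    rw [hScompl, add_zero, measure_univ] at h1
    exact h1
  have hsum1 : ∑ i, p i = 1 := by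
    have hdisj : (↑(Finset.univ : Finset (Fin k)) : Set (Fin k)).PairwiseDisjoint
        (fun i => ({((x i : ℤ):ℝ)} : Set ℝ)) := by
      intro a _ b _ hab
      exact Set.disjoint_singleton.mpr (fun e => hab (hinjR e))
    have hmeas : ∀ i ∈ (Finset.univ : Finset (Fin k)),
        MeasurableSet ({((x i:ℤ):ℝ)} : Set ℝ) := fun i _ => measurableSet_singleton _
    have hunion : (⋃ i ∈ (Finset.univ : Finset (Fin k)), ({((x i:ℤ):ℝ)} : Set ℝ)) = ↑S := by
      ext a
      simp [hS, eq_comm]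
    have h1 : ν ↑S = ∑ i, ν {((x i:ℤ):ℝ)} := by
      rw [← hunion, measure_biUnion_finset hdisj hmeas]
    calc ∑ i, p i = ∑ i, (ν {((x i:ℤ):ℝ)}).toReal := by
          refine Finset.sum_congr rfl fun i _ => (hνatom i).symm
      _ = (∑ i, ν {((x i:ℤ):ℝ)}).toReal :=
          (ENNReal.toReal_sum (fun i _ => measure_ne_top ν _)).symm
      _ = (ν ↑S).toReal := by rw [h1]
      _ = 1 := by rw [hSmeasure]; rfl
  have hk0 : (0:ℝ) < k := by
    have : (3:ℝ) ≤ k := by exact_mod_cast hk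
    linarith
  -- heavy atom
  obtain ⟨ℓ, hℓ⟩ : ∃ ℓ : Fin k, 1/(k:ℝ) ≤ p ℓ := by
    by_contra hc
    push_neg at hc
    have hlt : ∑ i : Fin k, p i < ∑ _i : Fin k, 1/(k:ℝ) :=
      Finset.sum_lt_sum_of_nonempty ⟨⟨0, by omega⟩, Finset.mem_univ _⟩ (fun i _ => hc i)
    rw [hsum1, Finset.sum_const, Finset.card_univ, Fintype.card_fin, nsmul_eq_mul] at hlt
    rw [mul_one_div, div_self (ne_of_gt hk0)] at hlt
    exact lt_irrefl _ hlt
  obtain ⟨j0, hj0⟩ : ∃ j0 : Fin k, j0 ≠ ℓ := by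
    have : 1 < Fintype.card (Fin k) := by rw [Fintype.card_fin]; omega
    exact Fintype.exists_ne_of_one_lt_card this ℓ
  set W := wParam x with hW
  have hW1 : 1 ≤ W := wParam_ge_one x hinj ℓ j0 hj0
  have hWR : (1:ℝ) ≤ (W:ℝ) := by exact_mod_cast hW1
  have hhR : (1:ℝ) ≤ (h:ℝ) := by exact_mod_cast hh
  set pm := Finset.univ.inf' (⟨⟨0, by omega⟩, Finset.mem_univ _⟩ :
      (Finset.univ : Finset (Fin k)).Nonempty) p with hpm
  have hpmle : ∀ i, pm ≤ p i := fun i => Finset.inf'_le p (Finset.mem_univ i)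
  have hpmpos : 0 < pm := by
    rw [hpm]
    exact (Finset.lt_inf'_iff _).mpr fun i _ => hp i
  -- evaluation of integrals over the finite support
  have hint : ∀ f : ℝ → ℝ, ∫ y, f y ∂ν = ∑ j, p j * f ((x j : ℤ):ℝ) := by
    intro f
    rw [← hrestrict]
    rw [MeasureTheory.setIntegral_finset S IntegrableOn.finset]
    rw [hS]
    rw [Finset.sum_image (fun a _ b _ hab => hinjR hab)]
    refine Finset.sum_congr rfl fun j _ => ?_
    rw [smul_eq_mul, measureReal_def, hνatom j]
  have hHeval : ∀ d : ℝ, Hsym ν d =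
      ∑ i, p i * ∑ j, p j * distNearestInt ((((x i:ℤ):ℝ) - ((x j:ℤ):ℝ)) * d)^2 := by
    intro d
    unfold Hsym
    rw [hint (fun a => ∫ y, distNearestInt ((a - y) * d) ^ 2 ∂ν)]
    refine Finset.sum_congr rfl fun i _ => ?_
    rw [hint (fun y => distNearestInt ((((x i:ℤ):ℝ) - y) * d) ^ 2)]
  -- the lower bound for each admissible d
  have hbound : ∀ d ∈ Set.Icc (1/(4*(h:ℝ))) (1/(2*(h:ℝ))),
      (1 / 16 : ℝ) * pm / (k * ((W : ℝ) * h) ^ 2) ≤ Hsym ν d := by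
    rintro d ⟨hd1, hd2⟩
    obtain ⟨j, hjℓ, hjbig⟩ := key_lemma hh x hinj hgcd ℓ j0 hj0 hd1 hd2
    rw [hHeval d]
    have hf : ∀ a b : ℝ, (0:ℝ) ≤ distNearestInt ((a - b) * d) ^ 2 := fun a b => sq_nonneg _
    have hterm : (1 / (4 * (W:ℝ)))^2 ≤
        distNearestInt ((((x ℓ:ℤ):ℝ) - ((x j:ℤ):ℝ)) * d) ^ 2 := by
      have heven : distNearestInt ((((x ℓ:ℤ):ℝ) - ((x j:ℤ):ℝ)) * d) =
          distNearestInt ((((x j:ℤ):ℝ) - ((x ℓ:ℤ):ℝ)) * d) := by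
        rw [← distNearestInt_neg]
        ring_nf
      rw [heven]
      have h0 : (0:ℝ) ≤ 1 / (4 * (W:ℝ)) := by positivity
      exact pow_le_pow_left₀ h0 hjbig 2
    -- single out the (ℓ, j) term
    have hinner : p j * distNearestInt ((((x ℓ:ℤ):ℝ) - ((x j:ℤ):ℝ)) * d) ^ 2 ≤
        ∑ j', p j' * distNearestInt ((((x ℓ:ℤ):ℝ) - ((x j':ℤ):ℝ)) * d) ^ 2 :=
      Finset.single_le_sum
        (f := fun j' => p j' * distNearestInt ((((x ℓ:ℤ):ℝ) - ((x j':ℤ):ℝ)) * d) ^ 2)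
        (fun j' _ => mul_nonneg (hp j').le (hf _ _)) (Finset.mem_univ j)
    have houter : p ℓ * ∑ j', p j' * distNearestInt ((((x ℓ:ℤ):ℝ) - ((x j':ℤ):ℝ)) * d) ^ 2 ≤
        ∑ i, p i * ∑ j', p j' * distNearestInt ((((x i:ℤ):ℝ) - ((x j':ℤ):ℝ)) * d) ^ 2 :=
      Finset.single_le_sum
        (f := fun i => p i * ∑ j', p j' * distNearestInt ((((x i:ℤ):ℝ) - ((x j':ℤ):ℝ)) * d) ^ 2)
        (fun i _ => mul_nonneg (hp i).le
          (Finset.sum_nonneg fun j' _ => mul_nonneg (hp j').le (hf _ _)))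
        (Finset.mem_univ ℓ)
    have hchain : (1/(k:ℝ)) * (pm * (1 / (4 * (W:ℝ)))^2) ≤
        ∑ i, p i * ∑ j', p j' * distNearestInt ((((x i:ℤ):ℝ) - ((x j':ℤ):ℝ)) * d) ^ 2 := by
      refine le_trans ?_ houter
      have h1 : pm * (1 / (4 * (W:ℝ)))^2 ≤
          p j * distNearestInt ((((x ℓ:ℤ):ℝ) - ((x j:ℤ):ℝ)) * d) ^ 2 :=
        mul_le_mul (hpmle j) hterm (by positivity) (hp j).le
      have h2 : (1/(k:ℝ)) * (pm * (1 / (4 * (W:ℝ)))^2) ≤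
          p ℓ * (p j * distNearestInt ((((x ℓ:ℤ):ℝ) - ((x j:ℤ):ℝ)) * d) ^ 2) :=
        mul_le_mul hℓ h1 (by positivity) (hp ℓ).le
      refine h2.trans ?_
      exact mul_le_mul_of_nonneg_left hinner (hp ℓ).le
    refine le_trans ?_ hchain
    -- arithmetic: (1/16) pm / (k (W h)²) ≤ (1/k) (pm / (16 W²))
    have hWpos : (0:ℝ) < (W:ℝ) := by linarith
    have hsq : (1:ℝ) ≤ (h:ℝ)^2 := by nlinarith
    have hcb : (k:ℝ) * (W:ℝ)^2 ≤ (k:ℝ) * ((W:ℝ)*(h:ℝ))^2 := by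
      calc (k:ℝ) * (W:ℝ)^2 = (k:ℝ) * (W:ℝ)^2 * 1 := by ring
        _ ≤ (k:ℝ) * (W:ℝ)^2 * (h:ℝ)^2 :=
            mul_le_mul_of_nonneg_left hsq (le_of_lt (mul_pos hk0 (pow_pos hWpos 2)))
        _ = (k:ℝ) * ((W:ℝ)*(h:ℝ))^2 := by ring
    have harr : (1 / 16 : ℝ) * pm / (k * ((W : ℝ) * h) ^ 2) ≤
        (1 / 16 : ℝ) * pm / (k * (W:ℝ) ^ 2) :=
      div_le_div_of_nonneg_left (by linarith) (mul_pos hk0 (by positivity)) hcb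
    refine harr.trans (le_of_eq ?_)
    have hWne : (W:ℝ) ≠ 0 := ne_of_gt hWpos
    have hkne : (k:ℝ) ≠ 0 := ne_of_gt hk0
    field_simp
    ring
  -- conclude via the infimum
  have hicc : (1/(4*(h:ℝ))) ≤ (1/(2*(h:ℝ))) := by
    apply div_le_div_of_nonneg_left (by norm_num) (by linarith) (by linarith)
  unfold HsymD
  apply le_csInf
  · exact (Set.nonempty_Icc.mpr hicc).image _
  · rintro b ⟨d, hd, rfl⟩
    exact hbound d hd
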